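/- If K and L are convex bodies in R^n with |K| = |L|, then N(K,L)^{1/n} ≤ 8·N(L,K)^{1/n}. -/

import Mathlib

open MeasureTheory Set
open scoped Pointwise ENNReal

/-- Covering number: the least `N` such that `A` is covered by `N` translates of `B`. -/
noncomputable def covN {n : ℕ} (A B : Set (EuclideanSpace ℝ (Fin n))) : ℕ :=
  sInf {N : ℕ | ∃ F : Finset (EuclideanSpace ℝ (Fin n)), F.card = N ∧ A ⊆ ⋃ c ∈ F, c +ᵥ B}

section aux

variable {n : ℕ}

local notation "E" => EuclideanSpace ℝ (Fin n)

private lemma ofReal_two_pow : ENNReal.ofReal ((2:ℝ)^n) = 2^n := by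
  rw [ENNReal.ofReal_pow (by norm_num)]; norm_num

private lemma ofReal_half_pow : ENNReal.ofReal ((2⁻¹:ℝ)^n) = ((2:ENNReal)^n)⁻¹ := by
  have h2 : ENNReal.ofReal ((2:ℝ)⁻¹) = 2⁻¹ := by
    rw [ENNReal.ofReal_inv_of_pos (by norm_num)]; norm_num
  rw [ENNReal.ofReal_pow (by norm_num), h2, ← ENNReal.inv_pow]

private lemma two_pow_ne_top : ((2:ENNReal)^n) ≠ ⊤ := by
  exact (ENNReal.pow_lt_top (by norm_num)).ne

private lemma two_pow_ne_zero : ((2:ENNReal)^n) ≠ 0 := by positivity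

/-- existence of a finite cover of a compact set by translates of a set with nonempty
interior. -/
private lemma exists_finite_cover (A B : Set E) (hA : IsCompact A)
    (hB : (interior B).Nonempty) :
    ∃ F : Finset E, A ⊆ ⋃ c ∈ F, c +ᵥ B := by
  obtain ⟨x0, hx0⟩ := hB
  have hcover : A ⊆ ⋃ c : E, c +ᵥ interior B := by
    intro y hy
    refine Set.mem_iUnion.2 ⟨y - x0, ?_⟩
    rw [Set.mem_vadd_set_iff_neg_vadd_mem]
    simpa [vadd_eq_add] using hx0
  obtain ⟨t, ht⟩ := hA.elim_finite_subcover (fun c : E => c +ᵥ interior B)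
    (fun c => isOpen_interior.vadd c) hcover
  refine ⟨t, ht.trans ?_⟩
  exact Set.iUnion₂_mono fun c _ => Set.vadd_set_mono interior_subset

/-- The covering number is realized by an actual cover. -/
private lemma covN_spec (A B : Set E) (hA : IsCompact A) (hB : (interior B).Nonempty) :
    ∃ F : Finset E, F.card = covN A B ∧ A ⊆ ⋃ c ∈ F, c +ᵥ B := by
  obtain ⟨F, hF⟩ := exists_finite_cover A B hA hB
  exact Nat.sInf_mem (⟨F.card, F, rfl, hF⟩ :
    {N : ℕ | ∃ F : Finset E, F.card = N ∧ A ⊆ ⋃ c ∈ F, c +ᵥ B}.Nonempty)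

private lemma covN_le {A B : Set E} {F : Finset E} (h : A ⊆ ⋃ c ∈ F, c +ᵥ B) :
    covN A B ≤ F.card :=
  Nat.sInf_le ⟨F, rfl, h⟩

/-- volume of `K + L'` is controlled by a cover of `L'` by translates of `K`. -/
private lemma vol_add_le_of_cover {K L' : Set E} (hKconv : Convex ℝ K)
    (F : Finset E) (hcov : L' ⊆ ⋃ c ∈ F, c +ᵥ K) :
    volume (K + L') ≤ (F.card : ℝ≥0∞) * ((2:ℝ≥0∞)^n * volume K) := by
  have hKK : K + K = (2:ℝ) • K := by
    have h := hKconv.add_smul (p := (1:ℝ)) (q := 1) zero_le_one zero_le_one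
    norm_num [one_smul] at h
    rw [h]
  have hsub : K + L' ⊆ ⋃ c ∈ F, c +ᵥ ((2:ℝ) • K) := by
    rintro z ⟨a, ha, b, hb, rfl⟩
    obtain ⟨c, hcF, k, hk, rfl⟩ := by
      simpa only [Set.mem_iUnion, Set.mem_vadd_set, exists_prop] using hcov hb
    refine Set.mem_iUnion₂.2 ⟨c, hcF, ?_⟩
    refine ⟨a + k, ?_, ?_⟩
    · rw [← hKK]; exact ⟨a, ha, k, hk, rfl⟩
    · simp only [vadd_eq_add]; abel
  calc volume (K + L') ≤ volume (⋃ c ∈ F, c +ᵥ ((2:ℝ) • K)) := measure_mono hsub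
    _ ≤ ∑ c ∈ F, volume (c +ᵥ ((2:ℝ) • K)) := measure_biUnion_finset_le F _
    _ = F.card * ((2:ℝ≥0∞)^n * volume K) := by
        simp only [measure_vadd, Measure.addHaar_smul, finrank_euclideanSpace_fin,
          Finset.sum_const, nsmul_eq_mul]
        congr 1
        rw [abs_of_pos (by positivity), ofReal_two_pow]


/-- Key Fubini step: some point `v` has `volume (L ∩ (2v - L)) ≥ 2⁻ⁿ * volume L`. -/
private lemma exists_good_center (L : Set E) (hLconv : Convex ℝ L) (hLcomp : IsCompact L)
    (hL0 : (interior L).Nonempty) :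
    ∃ v : E, ((2:ℝ≥0∞)^n)⁻¹ * volume L ≤
      volume {y : E | (2:ℝ) • v - y ∈ L ∧ y ∈ L} := by
  set μ := (volume : Measure (EuclideanSpace ℝ (Fin n))) with hμ
  have hLm : MeasurableSet L := hLcomp.isClosed.measurableSet
  have hLfin : μ L ≠ ⊤ := hLcomp.measure_lt_top.ne
  have hLpos : 0 < μ L :=
    lt_of_lt_of_le (isOpen_interior.measure_pos μ hL0) (measure_mono interior_subset)
  set c : ℝ≥0∞ := ((2:ℝ≥0∞)^n)⁻¹ * μ L with hc
  have hc_ne_top : c ≠ ⊤ :=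
    ENNReal.mul_ne_top (ENNReal.inv_ne_top.2 two_pow_ne_zero) hLfin
  set A : Set (E × E) := {p | (2:ℝ) • p.1 - p.2 ∈ L ∧ p.2 ∈ L} with hAdef
  have hA : MeasurableSet A := by
    have hc2 : Continuous fun p : E × E => ((2:ℝ) • p.1 - p.2, p.2) := by fun_prop
    exact (hLm.prod hLm).preimage hc2.measurable
  set g : E → ℝ≥0∞ := fun x => μ (Prod.mk x ⁻¹' A) with hgdef
  have hg : Measurable g := measurable_measure_prodMk_left hA
  have hinner : ∀ y, y ∈ L → μ {x : E | (2:ℝ) • x - y ∈ L} = c := by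
    intro y _
    have hset : {x : E | (2:ℝ) • x - y ∈ L} = ((2:ℝ)⁻¹) • (y +ᵥ L) := by
      ext x
      rw [mem_inv_smul_set_iff₀ (two_ne_zero) (y +ᵥ L) x,
        Set.mem_vadd_set_iff_neg_vadd_mem, vadd_eq_add, neg_add_eq_sub]
      exact Iff.rfl
    rw [hset, Measure.addHaar_smul, finrank_euclideanSpace_fin,
      abs_of_pos (by positivity), ofReal_half_pow, measure_vadd]
  have htot : ∫⁻ x, g x ∂μ = c * μ L := by
    calc ∫⁻ x, g x ∂μ = (μ.prod μ) A := (Measure.prod_apply hA).symm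
      _ = ∫⁻ y, μ ((fun x => (x, y)) ⁻¹' A) ∂μ := Measure.prod_apply_symm hA
      _ = ∫⁻ y, L.indicator (fun _ => c) y ∂μ := by
          refine lintegral_congr fun y => ?_
          by_cases hy : y ∈ L
          · rw [Set.indicator_of_mem hy]
            have hsl : ((fun x => (x, y)) ⁻¹' A) = {x : E | (2:ℝ) • x - y ∈ L} := by
              ext x; simp only [hAdef, Set.mem_preimage, Set.mem_setOf_eq, hy, and_true]
            rw [hsl, hinner y hy]
          · rw [Set.indicator_of_notMem hy]
            have hsl : ((fun x => (x, y)) ⁻¹' A) = (∅ : Set E) := by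
              ext x; simp only [hAdef, Set.mem_preimage, Set.mem_setOf_eq, hy, and_false,
                Set.mem_empty_iff_false]
            rw [hsl, measure_empty]
      _ = c * μ L := by rw [lintegral_indicator hLm, setLIntegral_const]
  by_contra hcon
  push_neg at hcon
  have hcon' : ∀ x, g x < c := by
    intro x
    exact lt_of_le_of_lt (le_of_eq rfl) (hcon x)
  have hsupp : ∀ x, x ∉ L → g x = 0 := by
    intro x hx
    have hempty : (Prod.mk x ⁻¹' A) = ∅ := by
      ext y
      simp only [hAdef, Set.mem_preimage, Set.mem_setOf_eq, Set.mem_empty_iff_false,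
        iff_false, not_and]
      intro h1 h2
      have hxL : x ∈ L := by
        have hcomb := hLconv h1 h2 (by norm_num : (0:ℝ) ≤ 2⁻¹) (by norm_num : (0:ℝ) ≤ 2⁻¹)
          (by norm_num : (2⁻¹:ℝ) + 2⁻¹ = 1)
        have hx2 : x = (2⁻¹:ℝ) • ((2:ℝ) • x - y) + (2⁻¹:ℝ) • y := by module
        rwa [← hx2] at hcomb
      exact hx hxL
    simp only [hgdef, hempty, measure_empty]
  have hsplit := lintegral_add_compl g hLm (μ := μ)
  have hcomp0 : ∫⁻ x in Lᶜ, g x ∂μ = 0 := by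
    rw [setLIntegral_congr_fun hLm.compl
      (fun x hx => hsupp x hx)]
    simp
  have hgL : ∫⁻ x in L, g x ∂μ = c * μ L := by
    rw [← htot, ← hsplit, hcomp0, add_zero]
  set h : E → ℝ≥0∞ := fun x => c - g x with hhdef
  have hh : Measurable h := measurable_const.sub hg
  have hch : ∫⁻ x in L, (g x + h x) ∂μ = c * μ L := by
    rw [setLIntegral_congr_fun hLm
      (fun x _ => add_tsub_cancel_of_le (hcon' x).le)]
    exact setLIntegral_const L c
  rw [lintegral_add_left hg, hgL] at hch
  have hcmul_ne_top : c * μ L ≠ ⊤ := ENNReal.mul_ne_top hc_ne_top hLfin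
  have h0 : ∫⁻ x in L, h x ∂μ = 0 := by
    have h2 : c * μ L + ∫⁻ x in L, h x ∂μ = c * μ L + 0 := by rw [add_zero, hch]
    exact (ENNReal.add_right_inj hcmul_ne_top).mp h2
  have hae := (lintegral_eq_zero_iff hh).mp h0
  have hpos : ∀ x, h x ≠ 0 := fun x => (tsub_pos_of_lt (hcon' x)).ne'
  rw [Filter.EventuallyEq, Filter.eventually_iff, mem_ae_iff] at hae
  have huniv : {x : E | h x = (0 : E → ℝ≥0∞) x}ᶜ = Set.univ := by
    ext x; simp [hpos x]
  rw [huniv, Measure.restrict_apply_univ] at hae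
  exact hLpos.ne' hae

end aux

/-- If `K` and `L` are convex bodies in ℝⁿ of equal volume, then
`N(K,L)^{1/n} ≤ 8 N(L,K)^{1/n}`. -/
theorem statement9 (n : ℕ) (hn : 0 < n) (K L : Set (EuclideanSpace ℝ (Fin n)))
    (hKconv : Convex ℝ K) (hKcomp : IsCompact K) (hK0 : (interior K).Nonempty)
    (hLconv : Convex ℝ L) (hLcomp : IsCompact L) (hL0 : (interior L).Nonempty)
    (hvol : volume K = volume L) :
    (covN K L : ℝ) ^ ((1 : ℝ) / n) ≤ 8 * (covN L K : ℝ) ^ ((1 : ℝ) / n) := by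
  classical
  have hLfin : volume L ≠ ⊤ := hLcomp.measure_lt_top.ne
  have hLpos : 0 < volume L :=
    lt_of_lt_of_le (isOpen_interior.measure_pos volume hL0) (measure_mono interior_subset)
  -- a cover of `L` by `M` translates of `K`
  obtain ⟨F, hFcard, hFcov⟩ := covN_spec L K hLcomp hK0
  set M := covN L K with hM
  -- a good center for near-symmetry of L
  obtain ⟨v, hv⟩ := exists_good_center L hLconv hLcomp hL0
  set T : Set (EuclideanSpace ℝ (Fin n)) := {y | (2:ℝ) • v - y ∈ L ∧ y ∈ L} with hT
  set S : Set (EuclideanSpace ℝ (Fin n)) := (-v) +ᵥ T with hS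
  have hSmem : ∀ z, z ∈ S ↔ (v - z ∈ L ∧ v + z ∈ L) := by
    intro z
    rw [hS, Set.mem_vadd_set_iff_neg_vadd_mem, vadd_eq_add, neg_neg]
    have h1 : (2:ℝ) • v - (v + z) = v - z := by module
    constructor
    · rintro ⟨h2, h3⟩; rw [h1] at h2; exact ⟨h2, h3⟩
    · rintro ⟨h2, h3⟩; exact ⟨by rw [h1]; exact h2, h3⟩
  have hSsymm : ∀ z ∈ S, -z ∈ S := by
    intro z hz
    rw [hSmem] at hz ⊢
    refine ⟨?_, ?_⟩
    · rw [sub_neg_eq_add]; exact hz.2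
    · rw [← sub_eq_add_neg]; exact hz.1
  have hSconv : Convex ℝ S := by
    intro z1 hz1 z2 hz2 a b ha hb hab
    rw [hSmem] at hz1 hz2 ⊢
    constructor
    · have hcomb := hLconv hz1.1 hz2.1 ha hb hab
      have e : a • (v - z1) + b • (v - z2) = (a + b) • v - (a • z1 + b • z2) := by module
      rw [e, hab, one_smul] at hcomb
      exact hcomb
    · have hcomb := hLconv hz1.2 hz2.2 ha hb hab
      have e : a • (v + z1) + b • (v + z2) = (a + b) • v + (a • z1 + b • z2) := by module
      rw [e, hab, one_smul] at hcomb
      exact hcomb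
  have hTcl : IsClosed T := by
    have hrepr : T = (fun y => (2:ℝ) • v - y) ⁻¹' L ∩ L := by
      ext y; simp [hT, Set.mem_preimage, Set.mem_setOf_eq]
    rw [hrepr]
    exact (hLcomp.isClosed.preimage (by fun_prop)).inter hLcomp.isClosed
  have hScl : IsClosed S := hTcl.vadd (-v)
  have hSmeas : MeasurableSet S := hScl.measurableSet
  have hvolS : volume S = volume T := measure_vadd _ _ _
  have hvolS_ge : ((2:ℝ≥0∞)^n)⁻¹ * volume L ≤ volume S := by rw [hvolS]; exact hv
  have hvolS_pos : 0 < volume S := by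
    refine lt_of_lt_of_le ?_ hvolS_ge
    exact ENNReal.mul_pos (ENNReal.inv_ne_zero.2 two_pow_ne_top) hLpos.ne'
  have hSsubL : S ⊆ (-v) +ᵥ L := by
    intro z hz
    rw [Set.mem_vadd_set_iff_neg_vadd_mem, vadd_eq_add, neg_neg]
    exact ((hSmem z).1 hz).2
  have hSne : S.Nonempty := by
    rcases Set.eq_empty_or_nonempty S with h | h
    · rw [h] at hvolS_pos; simp at hvolS_pos
    · exact h
  have hS0 : (0 : EuclideanSpace ℝ (Fin n)) ∈ S := by
    obtain ⟨z, hz⟩ := hSne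
    have h2 := hSsymm z hz
    have h3 := hSconv hz h2 (by norm_num : (0:ℝ) ≤ 2⁻¹) (by norm_num : (0:ℝ) ≤ 2⁻¹)
      (by norm_num : (2⁻¹:ℝ) + 2⁻¹ = 1)
    simpa [smul_neg] using h3
  set Sh : Set (EuclideanSpace ℝ (Fin n)) := (2⁻¹:ℝ) • S with hSh
  have hSh0 : (0 : EuclideanSpace ℝ (Fin n)) ∈ Sh := ⟨0, hS0, by simp⟩
  have hSh_sub : Sh ⊆ S := by
    rintro _ ⟨z, hz, rfl⟩
    have h3 := hSconv hz hS0 (by norm_num : (0:ℝ) ≤ 2⁻¹) (by norm_num : (0:ℝ) ≤ 2⁻¹)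
      (by norm_num : (2⁻¹:ℝ) + 2⁻¹ = 1)
    simpa using h3
  have hShSh : ∀ a ∈ Sh, ∀ b ∈ Sh, a + b ∈ S := by
    rintro _ ⟨z1, hz1, rfl⟩ _ ⟨z2, hz2, rfl⟩
    exact hSconv hz1 hz2 (by norm_num : (0:ℝ) ≤ 2⁻¹) (by norm_num : (0:ℝ) ≤ 2⁻¹)
      (by norm_num : (2⁻¹:ℝ) + 2⁻¹ = 1)
  have hSh_symm : ∀ a ∈ Sh, -a ∈ Sh := by
    rintro _ ⟨z, hz, rfl⟩
    exact ⟨-z, hSsymm z hz, by simp [smul_neg]⟩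
  have hShm : MeasurableSet Sh := hSmeas.const_smul₀ (2⁻¹:ℝ)
  have hmSh : volume Sh = ((2:ℝ≥0∞)^n)⁻¹ * volume S := by
    rw [hSh, Measure.addHaar_smul, finrank_euclideanSpace_fin, abs_of_pos (by positivity),
      ofReal_half_pow]
  have hvolS_ne_top : volume S ≠ ⊤ := by
    refine ne_top_of_le_ne_top ?_ (measure_mono hSsubL)
    rw [measure_vadd]; exact hLfin
  have hmSh_pos : volume Sh ≠ 0 := by
    rw [hmSh]
    exact mul_ne_zero (ENNReal.inv_ne_zero.2 two_pow_ne_top) hvolS_pos.ne'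
  have hmSh_ne_top : volume Sh ≠ ⊤ :=
    ne_top_of_le_ne_top hvolS_ne_top (measure_mono hSh_sub)
  -- the enveloping set
  set W : Set (EuclideanSpace ℝ (Fin n)) := K + ((-v) +ᵥ L) with hW
  have hWfin : volume W ≠ ⊤ := (hKcomp.add (hLcomp.vadd (-v))).measure_lt_top.ne
  -- packing bound
  have hpackbound : ∀ P : Finset (EuclideanSpace ℝ (Fin n)), ↑P ⊆ K →
      (↑P : Set (EuclideanSpace ℝ (Fin n))).PairwiseDisjoint (fun x => x +ᵥ Sh) →
      (P.card : ℝ≥0∞) * volume Sh ≤ volume W := by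
    intro P hPK hPd
    have hdis : volume (⋃ x ∈ P, x +ᵥ Sh) = ∑ x ∈ P, volume (x +ᵥ Sh) :=
      measure_biUnion_finset hPd (fun b _ => hShm.const_vadd b)
    have hsub : (⋃ x ∈ P, x +ᵥ Sh) ⊆ W := by
      intro z hz
      obtain ⟨x, hxP, hzx⟩ := Set.mem_iUnion₂.1 hz
      obtain ⟨s, hs, rfl⟩ := Set.mem_vadd_set.1 hzx
      exact ⟨x, hPK hxP, s, hSsubL (hSh_sub hs), rfl⟩
    calc (P.card : ℝ≥0∞) * volume Sh = ∑ _x ∈ P, volume Sh := by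
          rw [Finset.sum_const, nsmul_eq_mul]
      _ = ∑ x ∈ P, volume (x +ᵥ Sh) := by
          refine Finset.sum_congr rfl fun x _ => ?_
          rw [measure_vadd]
      _ = volume (⋃ x ∈ P, x +ᵥ Sh) := hdis.symm
      _ ≤ volume W := measure_mono hsub
  -- a maximal packing
  set Cards : Set ℕ := {k | ∃ P : Finset (EuclideanSpace ℝ (Fin n)),
    (↑P ⊆ K ∧ (↑P : Set (EuclideanSpace ℝ (Fin n))).PairwiseDisjoint (fun x => x +ᵥ Sh))
      ∧ P.card = k} with hCards
  have hCne : Cards.Nonempty := ⟨0, ∅, ⟨by simp, by simp⟩, rfl⟩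
  have hCbdd : BddAbove Cards := by
    refine ⟨⌈(volume W / volume Sh).toReal⌉₊, ?_⟩
    rintro k ⟨P, ⟨hPK, hPd⟩, rfl⟩
    have h1 := hpackbound P hPK hPd
    have h2 : (P.card : ℝ≥0∞) ≤ volume W / volume Sh :=
      (ENNReal.le_div_iff_mul_le (Or.inl hmSh_pos) (Or.inl hmSh_ne_top)).2 h1
    have h3 := ENNReal.toReal_mono (ENNReal.div_lt_top hWfin hmSh_pos).ne h2
    rw [ENNReal.toReal_natCast] at h3
    exact_mod_cast h3.trans (Nat.le_ceil _)
  obtain ⟨P, ⟨hPK, hPd⟩, hPcard⟩ := Nat.sSup_mem hCne hCbdd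
  -- maximality gives a covering by translates of S
  have hcoverK : K ⊆ ⋃ x ∈ P, x +ᵥ S := by
    intro y hy
    have hex : ∃ x ∈ P, ¬ Disjoint (y +ᵥ Sh) (x +ᵥ Sh) := by
      by_contra hall
      push_neg at hall
      have hyP : y ∉ P := by
        intro hyP
        have hd := hall y hyP
        rw [disjoint_self, bot_eq_empty] at hd
        have : y ∈ y +ᵥ Sh := ⟨0, hSh0, by simp⟩
        rw [hd] at this
        exact this
      have hmem : (insert y P).card ∈ Cards := by
        refine ⟨insert y P, ⟨?_, ?_⟩, rfl⟩
        · rw [Finset.coe_insert]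
          exact Set.insert_subset hy hPK
        · rw [Finset.coe_insert]
          exact Set.pairwiseDisjoint_insert.2 ⟨hPd, fun j hj _ => hall j hj⟩
      have hle := le_csSup hCbdd hmem
      rw [Finset.card_insert_of_notMem hyP, hPcard] at hle
      omega
    obtain ⟨x, hxP, hnd⟩ := hex
    obtain ⟨z, hz1, hz2⟩ := Set.not_disjoint_iff.1 hnd
    obtain ⟨a, ha, hza⟩ := Set.mem_vadd_set.1 hz1
    obtain ⟨b, hb, hzb⟩ := Set.mem_vadd_set.1 hz2
    refine Set.mem_iUnion₂.2 ⟨x, hxP, ?_⟩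
    rw [Set.mem_vadd_set]
    refine ⟨b + -a, hShSh b hb (-a) (hSh_symm a ha), ?_⟩
    have h : y + a = x + b := by
      rw [vadd_eq_add] at hza hzb
      rw [hza, hzb]
    rw [vadd_eq_add]
    calc x + (b + -a) = (x + b) + -a := by abel
      _ = (y + a) + -a := by rw [← h]
      _ = y := by abel
  -- hence a covering by translates of L
  have hKcov : K ⊆ ⋃ c ∈ P.image (fun x => x + -v), c +ᵥ L := by
    intro y hy
    obtain ⟨x, hxP, hyS⟩ := Set.mem_iUnion₂.1 (hcoverK hy)
    obtain ⟨z, hzS, hyz⟩ := Set.mem_vadd_set.1 hyS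
    obtain ⟨l, hl, hlz⟩ := Set.mem_vadd_set.1 (hSsubL hzS)
    refine Set.mem_iUnion₂.2 ⟨x + -v, Finset.mem_image.2 ⟨x, hxP, rfl⟩, ?_⟩
    rw [Set.mem_vadd_set]
    refine ⟨l, hl, ?_⟩
    rw [vadd_eq_add] at hyz hlz ⊢
    rw [← hyz, ← hlz]
    abel
  have hcovNle : covN K L ≤ P.card :=
    (covN_le hKcov).trans Finset.card_image_le
  -- volume upper bound for W
  have hWle : volume W ≤ (M : ℝ≥0∞) * ((2:ℝ≥0∞)^n * volume L) := by
    have hcov' : (-v) +ᵥ L ⊆ ⋃ c ∈ F.image (fun c => c + -v), c +ᵥ K := by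
      intro y hy
      obtain ⟨l, hl, hly⟩ := Set.mem_vadd_set.1 hy
      obtain ⟨c, hcF, hck⟩ := Set.mem_iUnion₂.1 (hFcov hl)
      obtain ⟨k, hk, hkl⟩ := Set.mem_vadd_set.1 hck
      refine Set.mem_iUnion₂.2 ⟨c + -v, Finset.mem_image.2 ⟨c, hcF, rfl⟩, ?_⟩
      rw [Set.mem_vadd_set]
      refine ⟨k, hk, ?_⟩
      rw [vadd_eq_add] at hly hkl ⊢
      rw [← hly, ← hkl]
      abel
    have h1 := vol_add_le_of_cover hKconv (F.image (fun c => c + -v)) hcov'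
    rw [hW, ← hvol]
    refine h1.trans ?_
    refine mul_le_mul_left ?_ _
    exact_mod_cast (Finset.card_image_le.trans hFcard.le)
  -- put the chain together
  have hLS : volume L ≤ (2:ℝ≥0∞)^n * volume S := by
    calc volume L = (2:ℝ≥0∞)^n * (((2:ℝ≥0∞)^n)⁻¹ * volume L) := by
          rw [← mul_assoc, ENNReal.mul_inv_cancel two_pow_ne_zero two_pow_ne_top, one_mul]
      _ ≤ (2:ℝ≥0∞)^n * volume S := mul_le_mul_right hvolS_ge _
  have hSSh : volume S = (2:ℝ≥0∞)^n * volume Sh := by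
    rw [hmSh, ← mul_assoc, ENNReal.mul_inv_cancel two_pow_ne_zero two_pow_ne_top, one_mul]
  have hchain : (P.card : ℝ≥0∞) * volume Sh ≤ ((8^n * M : ℕ) : ℝ≥0∞) * volume Sh := by
    calc (P.card : ℝ≥0∞) * volume Sh ≤ volume W := hpackbound P hPK hPd
      _ ≤ (M : ℝ≥0∞) * ((2:ℝ≥0∞)^n * volume L) := hWle
      _ ≤ (M : ℝ≥0∞) * ((2:ℝ≥0∞)^n * ((2:ℝ≥0∞)^n * ((2:ℝ≥0∞)^n * volume Sh))) := by
          refine mul_le_mul_right (mul_le_mul_right ?_ _) _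
          rw [← hSSh]
          exact hLS
      _ = ((8^n * M : ℕ) : ℝ≥0∞) * volume Sh := by
          push_cast
          have h8 : ((8:ℝ≥0∞))^n = (2:ℝ≥0∞)^n * (2:ℝ≥0∞)^n * (2:ℝ≥0∞)^n := by
            rw [← mul_pow, ← mul_pow]; norm_num
          rw [h8]; ring
  have hPle : P.card ≤ 8^n * M := by
    have hENN : (P.card : ℝ≥0∞) ≤ ((8^n * M : ℕ) : ℝ≥0∞) :=
      (ENNReal.mul_le_mul_iff_left hmSh_pos hmSh_ne_top).1 hchain
    exact_mod_cast hENN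
  have hfinal : covN K L ≤ 8^n * covN L K := hcovNle.trans hPle
  -- conclude via rpow
  have h8 : (covN K L : ℝ) ≤ (8:ℝ)^n * (covN L K : ℝ) := by exact_mod_cast hfinal
  have hn' : (n:ℝ) ≠ 0 := by exact_mod_cast hn.ne'
  calc (covN K L : ℝ) ^ ((1:ℝ)/n)
      ≤ ((8:ℝ)^n * (covN L K : ℝ)) ^ ((1:ℝ)/n) :=
        Real.rpow_le_rpow (by positivity) h8 (by positivity)
    _ = ((8:ℝ)^n) ^ ((1:ℝ)/n) * (covN L K : ℝ) ^ ((1:ℝ)/n) :=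
        Real.mul_rpow (by positivity) (by positivity)
    _ = 8 * (covN L K : ℝ) ^ ((1:ℝ)/n) := by
        congr 1
        rw [← Real.rpow_natCast 8 n, ← Real.rpow_mul (by norm_num : (0:ℝ) ≤ 8),
          mul_one_div, div_self hn', Real.rpow_one]
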